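/- Let T : c₀(Γ) → E be a bounded operator into a Banach space E such that there exists an injective bounded operator U from the closure of the image of T into ℓ_∞. Then there is a countable subset Δ of Γ such that T = T ∘ P_Δ; equivalently, T e_γ = 0 for all γ outside a countable set. -/

import Mathlib

open scoped ZeroAtInfty ENNReal

/-- The unit vector `e_γ` of `c₀(Γ)` (for `Γ` discrete), realised in `C₀(Γ, ℝ)`. -/
noncomputable def c0Single (Γ : Type*) [TopologicalSpace Γ] [DiscreteTopology Γ]
    (γ : Γ) : C₀(Γ, ℝ) where
  toFun := Set.indicator ({γ} : Set Γ) (fun _ => (1 : ℝ))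
  continuous_toFun := continuous_of_discreteTopology
  zero_at_infty' := by
    have h : Set.indicator ({γ} : Set Γ) (fun _ => (1 : ℝ)) =ᶠ[Filter.cocompact Γ]
        (fun _ => (0 : ℝ)) := by
      filter_upwards [Filter.mem_cocompact.mpr
        ⟨{γ}, isCompact_singleton, subset_rfl⟩] with β hβ
      exact Set.indicator_of_notMem hβ _
    exact Filter.Tendsto.congr' h.symm tendsto_const_nhds

lemma c0Single_apply {Γ : Type*} [TopologicalSpace Γ] [DiscreteTopology Γ]
    [DecidableEq Γ] (γ β : Γ) :
    c0Single Γ γ β = if β = γ then (1 : ℝ) else 0 := by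
  simp [c0Single, Set.indicator_apply, Pi.single_apply]

lemma c0_sum_apply {Γ : Type*} [TopologicalSpace Γ] [DiscreteTopology Γ]
    {ι : Type*} (S : Finset ι) (g : ι → C₀(Γ, ℝ)) (β : Γ) :
    (∑ i ∈ S, g i) β = ∑ i ∈ S, g i β := by
  induction S using Finset.cons_induction with
  | empty => simp
  | cons a s ha ih =>
    rw [Finset.sum_cons, Finset.sum_cons, ZeroAtInftyContinuousMap.coe_add,
      Pi.add_apply, ih]

/-- A bounded functional on `c₀(Γ)` vanishes on all but countably many unit vectors. -/
lemma countable_support_functional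
    {Γ : Type*} [TopologicalSpace Γ] [DiscreteTopology Γ]
    (f : C₀(Γ, ℝ) →L[ℝ] ℝ) :
    {γ : Γ | f (c0Single Γ γ) ≠ 0}.Countable := by
  classical
  have hfin : ∀ k : ℕ, {γ : Γ | 1 / (k + 1 : ℝ) ≤ |f (c0Single Γ γ)|}.Finite := by
    intro k
    by_contra hinf
    have hinf' : Set.Infinite _ := hinf
    obtain ⟨S, hSsub, hScard⟩ :=
      hinf'.exists_subset_card_eq (⌈(k + 1 : ℝ) * ‖f‖⌉₊ + 1)
    set c : Γ → ℝ := fun γ => if 0 ≤ f (c0Single Γ γ) then 1 else -1 with hc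
    set x : C₀(Γ, ℝ) := ∑ γ ∈ S, c γ • c0Single Γ γ with hx
    -- pointwise values of x
    have hxval : ∀ β, x β = if β ∈ S then c β else 0 := by
      intro β
      have h1 : x β = ∑ γ ∈ S, (c γ • c0Single Γ γ) β := by
        rw [hx]; exact c0_sum_apply S _ β
      rw [h1]
      have : ∀ γ ∈ S, (c γ • c0Single Γ γ) β = if γ = β then c γ else 0 := by
        intro γ _
        rw [ZeroAtInftyContinuousMap.coe_smul, Pi.smul_apply, c0Single_apply,
          smul_eq_mul]
        by_cases hβγ : β = γ
        · simp [hβγ]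
        · rw [if_neg hβγ, mul_zero,
            if_neg (fun h : γ = β => hβγ h.symm)]
      rw [Finset.sum_congr rfl this, Finset.sum_ite_eq' S β c]
    -- norm of x is at most 1
    have hxnorm : ‖x‖ ≤ 1 := by
      rw [← ZeroAtInftyContinuousMap.norm_toBCF_eq_norm]
      refine (BoundedContinuousFunction.norm_le zero_le_one).mpr fun β => ?_
      have : x.toBCF β = x β := rfl
      rw [this, hxval β]
      by_cases hβ : β ∈ S <;> simp [hβ, hc] <;> split <;> simp
    -- value of f on x
    have hfx : f x = ∑ γ ∈ S, |f (c0Single Γ γ)| := by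
      rw [hx, map_sum]
      refine Finset.sum_congr rfl fun γ _ => ?_
      rw [map_smul, smul_eq_mul, hc]
      by_cases hγ : 0 ≤ f (c0Single Γ γ)
      · simp [hγ, abs_of_nonneg hγ]
      · simp [hγ, abs_of_neg (lt_of_not_ge hγ)]
    -- lower bound
    have hlow : (S.card : ℝ) * (1 / (k + 1 : ℝ)) ≤ f x := by
      rw [hfx]
      calc (S.card : ℝ) * (1 / (k + 1 : ℝ)) = ∑ _γ ∈ S, (1 / (k + 1 : ℝ)) := by
            rw [Finset.sum_const, nsmul_eq_mul]
        _ ≤ ∑ γ ∈ S, |f (c0Single Γ γ)| :=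
            Finset.sum_le_sum fun γ hγ => hSsub hγ
    have hup : f x ≤ ‖f‖ := by
      calc f x ≤ |f x| := le_abs_self _
        _ ≤ ‖f‖ * ‖x‖ := f.le_opNorm x
        _ ≤ ‖f‖ * 1 := by
            exact mul_le_mul_of_nonneg_left hxnorm (norm_nonneg f)
        _ = ‖f‖ := mul_one _
    have hk : (0 : ℝ) < k + 1 := by positivity
    have h1 : (S.card : ℝ) ≤ (k + 1 : ℝ) * ‖f‖ := by
      have := hlow.trans hup
      rw [mul_one_div, div_le_iff₀ hk] at this
      linarith [this]
    have h2 : (k + 1 : ℝ) * ‖f‖ < (S.card : ℝ) := by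
      rw [hScard]
      push_cast
      have := Nat.le_ceil ((k + 1 : ℝ) * ‖f‖)
      linarith
    linarith
  have hsub : {γ : Γ | f (c0Single Γ γ) ≠ 0} ⊆
      ⋃ k : ℕ, {γ : Γ | 1 / (k + 1 : ℝ) ≤ |f (c0Single Γ γ)|} := by
    intro γ hγ
    obtain ⟨k, hk⟩ := exists_nat_one_div_lt (abs_pos.mpr hγ)
    exact Set.mem_iUnion.mpr ⟨k, le_of_lt hk⟩
  exact (Set.countable_iUnion fun k => (hfin k).countable).mono hsub

/-- Let `T : c₀(Γ) → E` be a bounded operator into a Banach space `E` such that there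
is an injective bounded operator `U` from the closure of the image of `T` into `ℓ_∞`.
Then `T e_γ = 0` for all `γ` outside a countable subset `Δ` of `Γ`
(equivalently, `T = T ∘ P_Δ`). -/
theorem c0_operator_countably_supported
    (Γ : Type*) [Nonempty Γ] [TopologicalSpace Γ] [DiscreteTopology Γ]
    (E : Type*) [NormedAddCommGroup E] [NormedSpace ℝ E] [CompleteSpace E]
    (T : C₀(Γ, ℝ) →L[ℝ] E)
    (U : ↥((LinearMap.range (T : C₀(Γ, ℝ) →ₗ[ℝ] E)).topologicalClosure) →L[ℝ]
      lp (fun _ : ℕ => ℝ) ∞)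
    (hU : Function.Injective U) :
    ∃ Δ : Set Γ, Δ.Countable ∧ ∀ γ ∉ Δ, T (c0Single Γ γ) = 0 := by
  have hmem : ∀ x, T x ∈ (LinearMap.range (T : C₀(Γ, ℝ) →ₗ[ℝ] E)).topologicalClosure :=
    fun x => Submodule.le_topologicalClosure _ ⟨x, rfl⟩
  set V : C₀(Γ, ℝ) →L[ℝ] lp (fun _ : ℕ => ℝ) ∞ :=
    U.comp (T.codRestrict _ hmem) with hVdef
  have hcoord : ∀ n : ℕ, ∃ g : C₀(Γ, ℝ) →L[ℝ] ℝ, ∀ x, g x = (V x : ℕ → ℝ) n := by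
    intro n
    refine ⟨LinearMap.mkContinuous
      { toFun := fun x => (V x : ℕ → ℝ) n
        map_add' := fun x y => by
          show ((V (x + y) : ℕ → ℝ) n) = ((V x : ℕ → ℝ) n) + ((V y : ℕ → ℝ) n)
          rw [map_add, lp.coeFn_add, Pi.add_apply]
        map_smul' := fun r x => by
          show ((V (r • x) : ℕ → ℝ) n) = r • ((V x : ℕ → ℝ) n)
          rw [map_smul, lp.coeFn_smul, Pi.smul_apply] } ‖V‖ fun x => ?_,
      fun x => rfl⟩
    calc ‖(V x : ℕ → ℝ) n‖ ≤ ‖V x‖ := lp.norm_apply_le_norm ENNReal.top_ne_zero (V x) n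
      _ ≤ ‖V‖ * ‖x‖ := V.le_opNorm x
  choose g hg using hcoord
  refine ⟨⋃ n : ℕ, {γ : Γ | g n (c0Single Γ γ) ≠ 0},
    Set.countable_iUnion fun n => countable_support_functional (g n), fun γ hγ => ?_⟩
  have hzero : ∀ n : ℕ, (V (c0Single Γ γ) : ℕ → ℝ) n = 0 := by
    intro n
    have := Set.notMem_subset (Set.subset_iUnion
      (fun n => {γ : Γ | g n (c0Single Γ γ) ≠ 0}) n) hγ
    simpa [hg n] using this
  have hV0 : V (c0Single Γ γ) = 0 := by
    apply lp.ext
    funext n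
    simpa using hzero n
  have h0 : T.codRestrict _ hmem (c0Single Γ γ) = 0 := by
    apply hU
    rw [map_zero]
    exact hV0
  have := congrArg Subtype.val h0
  simpa using this
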